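/- Let F be a field of characteristic zero and let q ∈ F be a primitive n-th root of unity for some integer n ≥ 1 (i.e., q^n = 1 and q^k ≠ 1 for 0 < k < n). Then an element f of the quantum plane O_q(F²) is central if and only if f lies in the F-linear span of the monomials x^i·y^j with n dividing i and n dividing j. -/

import Mathlib

noncomputable section

/-- The defining relation of the quantum plane: `y * x = q • (x * y)`. -/
inductive QRel (F : Type) [Field F] (q : F) :
    FreeAlgebra F (Fin 2) → FreeAlgebra F (Fin 2) → Prop
  | rel : QRel F q (FreeAlgebra.ι F 1 * FreeAlgebra.ι F 0)
      (q • (FreeAlgebra.ι F 0 * FreeAlgebra.ι F 1))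

/-- The quantum plane `O_q(F²)`. -/
abbrev QPlane (F : Type) [Field F] (q : F) : Type := RingQuot (QRel F q)

/-- The generator `x` of the quantum plane. -/
def Qx (F : Type) [Field F] (q : F) : QPlane F q :=
  RingQuot.mkAlgHom F (QRel F q) (FreeAlgebra.ι F 0)

/-- The generator `y` of the quantum plane. -/
def Qy (F : Type) [Field F] (q : F) : QPlane F q :=
  RingQuot.mkAlgHom F (QRel F q) (FreeAlgebra.ι F 1)

namespace QAux

variable (F : Type) [Field F] (q : F)

/-- The underlying vector space of the standard module. -/
abbrev QV (F : Type) [Field F] : Type := (ℕ × ℕ) →₀ F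

/-- Action of `x`: shift first index. -/
def Xmap : QV F →ₗ[F] QV F := Finsupp.lmapDomain F F (fun p => (p.1 + 1, p.2))

/-- Action of `y`: shift second index, scale by `q ^ first index`. -/
def Ymap : QV F →ₗ[F] QV F :=
  Finsupp.linearCombination F (fun p : ℕ × ℕ => Finsupp.single (p.1, p.2 + 1) (q ^ p.1))

lemma Xmap_single (p : ℕ × ℕ) (c : F) :
    Xmap F (Finsupp.single p c) = Finsupp.single (p.1 + 1, p.2) c := by
  simp [Xmap, Finsupp.mapDomain_single]

lemma Ymap_single (p : ℕ × ℕ) (c : F) :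
    Ymap F q (Finsupp.single p c) = Finsupp.single (p.1, p.2 + 1) (c * q ^ p.1) := by
  simp [Ymap, Finsupp.linearCombination_single, Finsupp.smul_single', smul_eq_mul]

/-- The representation of the free algebra. -/
def rho0 : FreeAlgebra F (Fin 2) →ₐ[F] Module.End F (QV F) :=
  FreeAlgebra.lift F (fun i : Fin 2 => if i = 0 then Xmap F else Ymap F q)

lemma rho0_rel : ∀ ⦃a b : FreeAlgebra F (Fin 2)⦄, QRel F q a b → rho0 F q a = rho0 F q b := by
  rintro _ _ ⟨⟩
  rw [map_mul, map_smul, map_mul]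
  simp only [rho0, FreeAlgebra.lift_ι_apply]
  norm_num
  apply Finsupp.lhom_ext
  intro p c
  simp only [LinearMap.smul_apply, Module.End.mul_apply,
    Xmap_single, Ymap_single, Finsupp.smul_single', smul_eq_mul]
  rw [pow_succ]
  ring_nf

/-- The representation of the quantum plane. -/
def rho : QPlane F q →ₐ[F] Module.End F (QV F) :=
  RingQuot.liftAlgHom F ⟨rho0 F q, rho0_rel F q⟩

lemma rho_x : rho F q (Qx F q) = Xmap F := by
  rw [Qx, rho, RingQuot.liftAlgHom_mkAlgHom_apply]
  simp [rho0, FreeAlgebra.lift_ι_apply]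

lemma rho_y : rho F q (Qy F q) = Ymap F q := by
  rw [Qy, rho, RingQuot.liftAlgHom_mkAlgHom_apply]
  simp [rho0, FreeAlgebra.lift_ι_apply]

end QAux
namespace QAux

variable (F : Type) [Field F] (q : F)

lemma yx : Qy F q * Qx F q = q • (Qx F q * Qy F q) := by
  rw [Qx, Qy, ← map_mul, ← map_mul, ← map_smul]
  exact RingQuot.mkAlgHom_rel F QRel.rel

lemma y_xpow (k : ℕ) : Qy F q * Qx F q ^ k = q ^ k • (Qx F q ^ k * Qy F q) := by
  induction k with
  | zero => simp
  | succ k ih =>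
    rw [pow_succ, ← mul_assoc, ih, smul_mul_assoc, mul_assoc, yx, mul_smul_comm,
      smul_smul, ← pow_succ]
    congr 1
    exact (mul_assoc _ _ _).symm

lemma ypow_xpow (j k : ℕ) :
    Qy F q ^ j * Qx F q ^ k = q ^ (j * k) • (Qx F q ^ k * Qy F q ^ j) := by
  induction j with
  | zero => simp
  | succ j ih =>
    rw [pow_succ, mul_assoc, y_xpow, mul_smul_comm, ← mul_assoc, ih, smul_mul_assoc,
      smul_smul, ← pow_add]
    congr 1
    · ring_nf
    · rw [mul_assoc, ← pow_succ]

lemma mono_mul (i j k l : ℕ) :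
    (Qx F q ^ i * Qy F q ^ j) * (Qx F q ^ k * Qy F q ^ l) =
      q ^ (j * k) • (Qx F q ^ (i + k) * Qy F q ^ (j + l)) := by
  rw [mul_assoc, ← mul_assoc (Qy F q ^ j), ypow_xpow, smul_mul_assoc, mul_smul_comm]
  congr 1
  simp [pow_add, mul_assoc]

end QAux
namespace QAux

variable (F : Type) [Field F] (q : F)

lemma Xmap_pow (i : ℕ) (p : ℕ × ℕ) (c : F) :
    (Xmap F ^ i) (Finsupp.single p c) = Finsupp.single (p.1 + i, p.2) c := by
  induction i with
  | zero => simp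
  | succ i ih =>
    rw [pow_succ', Module.End.mul_apply, ih, Xmap_single]
    norm_num
    ring_nf

lemma Ymap_pow (j b : ℕ) :
    (Ymap F q ^ j) (Finsupp.single ((0 : ℕ), b) (1 : F)) =
      Finsupp.single (0, b + j) 1 := by
  induction j with
  | zero => simp
  | succ j ih =>
    rw [pow_succ', Module.End.mul_apply, ih, Ymap_single]
    norm_num
    ring_nf

/-- Evaluation of the representation at the cyclic vector. -/
def phi : QPlane F q →ₗ[F] QV F where
  toFun f := rho F q f (Finsupp.single (0, 0) 1)
  map_add' a b := by simp [map_add]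
  map_smul' a b := by simp [map_smul]

lemma phi_mono (i j : ℕ) :
    phi F q (Qx F q ^ i * Qy F q ^ j) = Finsupp.single (i, j) 1 := by
  show (rho F q) (Qx F q ^ i * Qy F q ^ j) (Finsupp.single (0, 0) 1) = _
  rw [map_mul, map_pow, map_pow, rho_x, rho_y, Module.End.mul_apply, Ymap_pow, Xmap_pow]
  norm_num

/-- The monomial map. -/
def psi : QV F →ₗ[F] QPlane F q :=
  Finsupp.linearCombination F (fun p : ℕ × ℕ => Qx F q ^ p.1 * Qy F q ^ p.2)

lemma phi_psi : (phi F q).comp (psi F q) = LinearMap.id := by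
  apply Finsupp.lhom_ext
  intro p c
  simp only [LinearMap.comp_apply, psi, Finsupp.linearCombination_single, map_smul,
    phi_mono, LinearMap.id_apply, Finsupp.smul_single', mul_one]

lemma span_mono_top :
    Submodule.span F (Set.range (fun p : ℕ × ℕ => Qx F q ^ p.1 * Qy F q ^ p.2)) = ⊤ := by
  set M := Set.range (fun p : ℕ × ℕ => Qx F q ^ p.1 * Qy F q ^ p.2) with hM
  have hmul : Submodule.span F M * Submodule.span F M ≤ Submodule.span F M := by
    rw [Submodule.span_mul_span]
    apply Submodule.span_le.2
    rintro _ ⟨_, ⟨p, rfl⟩, _, ⟨r, rfl⟩, rfl⟩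
    show (Qx F q ^ p.1 * Qy F q ^ p.2) * (Qx F q ^ r.1 * Qy F q ^ r.2) ∈ _
    rw [mono_mul]
    exact Submodule.smul_mem _ _ (Submodule.subset_span ⟨(p.1 + r.1, p.2 + r.2), rfl⟩)
  rw [eq_top_iff]
  rintro z -
  obtain ⟨a, rfl⟩ := RingQuot.mkAlgHom_surjective F (QRel F q) z
  induction a using FreeAlgebra.induction with
  | grade0 c =>
    have : (RingQuot.mkAlgHom F (QRel F q)) (algebraMap F (FreeAlgebra F (Fin 2)) c)
        = c • (Qx F q ^ 0 * Qy F q ^ 0) := by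
      simp [Algebra.algebraMap_eq_smul_one]
    rw [this]
    exact Submodule.smul_mem _ _ (Submodule.subset_span ⟨(0, 0), rfl⟩)
  | grade1 i =>
    fin_cases i
    · exact Submodule.subset_span ⟨(1, 0), by simp [Qx]⟩
    · exact Submodule.subset_span ⟨(0, 1), by simp [Qy]⟩
  | mul a b ha hb =>
    rw [map_mul]
    exact hmul (Submodule.mul_mem_mul ha hb)
  | add a b ha hb =>
    rw [map_add]
    exact add_mem ha hb

lemma psi_surjective : Function.Surjective (psi F q) := by
  intro z
  have : z ∈ LinearMap.range (psi F q) := by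
    rw [psi, Finsupp.range_linearCombination, span_mono_top]
    trivial
  exact this

lemma psi_phi (f : QPlane F q) : psi F q (phi F q f) = f := by
  obtain ⟨c, rfl⟩ := psi_surjective F q f
  have := congrArg (fun T => psi F q (T c)) (phi_psi F q)
  simpa using this

end QAux
namespace QAux

variable (F : Type) [Field F] (q : F)

lemma eval_lc (σ : ℕ × ℕ → ℕ × ℕ) (hσ : Function.Injective σ) (w : ℕ × ℕ → F)
    (c : QV F) (p : ℕ × ℕ) :
    (Finsupp.linearCombination F (fun r => Finsupp.single (σ r) (w r)) c) (σ p)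
      = c p * w p := by
  classical
  rw [Finsupp.linearCombination_apply, Finsupp.sum, Finsupp.finset_sum_apply]
  rw [Finset.sum_eq_single p]
  · simp [Finsupp.smul_single', Finsupp.single_apply]
  · intro r hr hne
    rw [Finsupp.smul_single', Finsupp.single_eq_of_ne' (fun h => hne (hσ h))]
  · intro hp
    simp [Finsupp.notMem_support_iff.mp hp]

lemma central_of_gen (z : QPlane F q) (hx : z * Qx F q = Qx F q * z)
    (hy : z * Qy F q = Qy F q * z) (g : QPlane F q) : z * g = g * z := by
  obtain ⟨a, rfl⟩ := RingQuot.mkAlgHom_surjective F (QRel F q) g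
  induction a using FreeAlgebra.induction with
  | grade0 c => rw [AlgHom.commutes]; exact (Algebra.commutes c z).symm
  | grade1 i =>
    fin_cases i
    · exact hx
    · exact hy
  | mul a b ha hb => rw [map_mul, ← mul_assoc, ha, mul_assoc, hb, ← mul_assoc]
  | add a b ha hb => rw [map_add, mul_add, add_mul, ha, hb]

lemma pow_eq_one_of (n : ℕ) (hn : 1 ≤ n) (hqn : q ^ n = 1)
    (hprim : ∀ k : ℕ, 0 < k → k < n → q ^ k ≠ 1) (k : ℕ) (hk : q ^ k = 1) : n ∣ k := by
  have hkeq : k = n * (k / n) + k % n := (Nat.div_add_mod k n).symm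
  rw [hkeq, pow_add, pow_mul, hqn, one_pow, one_mul] at hk
  rcases Nat.eq_zero_or_pos (k % n) with h | h
  · exact Nat.dvd_of_mod_eq_zero h
  · exact absurd hk (hprim _ h (Nat.mod_lt k hn))

end QAux
namespace QAux

variable (F : Type) [Field F] (q : F)

lemma mono_mul_x (i j : ℕ) :
    (Qx F q ^ i * Qy F q ^ j) * Qx F q = q ^ j • (Qx F q ^ (i + 1) * Qy F q ^ j) := by
  simpa using mono_mul F q i j 1 0

lemma x_mul_mono (i j : ℕ) :
    Qx F q * (Qx F q ^ i * Qy F q ^ j) = Qx F q ^ (i + 1) * Qy F q ^ j := by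
  have := mono_mul F q 1 0 i j
  simpa [add_comm] using this

lemma mono_mul_y (i j : ℕ) :
    (Qx F q ^ i * Qy F q ^ j) * Qy F q = Qx F q ^ i * Qy F q ^ (j + 1) := by
  simpa using mono_mul F q i j 0 1

lemma y_mul_mono (i j : ℕ) :
    Qy F q * (Qx F q ^ i * Qy F q ^ j) = q ^ i • (Qx F q ^ i * Qy F q ^ (j + 1)) := by
  have := mono_mul F q 0 1 i j
  simpa [add_comm] using this

end QAux
namespace QAux

variable (F : Type) [Field F] (q : F)

lemma inj_x : Function.Injective (fun r : ℕ × ℕ => (r.1 + 1, r.2)) := by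
  rintro ⟨a1, a2⟩ ⟨b1, b2⟩ h
  simp only [Prod.mk.injEq] at h
  exact Prod.ext (by omega) h.2

lemma inj_y : Function.Injective (fun r : ℕ × ℕ => (r.1, r.2 + 1)) := by
  rintro ⟨a1, a2⟩ ⟨b1, b2⟩ h
  simp only [Prod.mk.injEq] at h
  exact Prod.ext h.1 (by omega)

lemma phi_mul_right_x (c : QV F) :
    phi F q (psi F q c * Qx F q) =
      Finsupp.linearCombination F
        (fun p : ℕ × ℕ => Finsupp.single (p.1 + 1, p.2) (q ^ p.2)) c := by
  have h1 : psi F q c * Qx F q = (LinearMap.mulRight F (Qx F q)) (psi F q c) := rfl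
  rw [h1, psi, Finsupp.apply_linearCombination, Finsupp.apply_linearCombination]
  have h2 : ((phi F q) ∘ (LinearMap.mulRight F (Qx F q)) ∘
      fun p : ℕ × ℕ => Qx F q ^ p.1 * Qy F q ^ p.2) =
      fun p : ℕ × ℕ => Finsupp.single (p.1 + 1, p.2) (q ^ p.2) := by
    funext p
    simp only [Function.comp_apply, LinearMap.mulRight_apply]
    rw [mono_mul_x, map_smul, phi_mono, Finsupp.smul_single', mul_one]
  rw [h2]

lemma phi_mul_left_x (c : QV F) :
    phi F q (Qx F q * psi F q c) =
      Finsupp.linearCombination F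
        (fun p : ℕ × ℕ => Finsupp.single (p.1 + 1, p.2) ((1 : F))) c := by
  have h1 : Qx F q * psi F q c = (LinearMap.mulLeft F (Qx F q)) (psi F q c) := rfl
  rw [h1, psi, Finsupp.apply_linearCombination, Finsupp.apply_linearCombination]
  have h2 : ((phi F q) ∘ (LinearMap.mulLeft F (Qx F q)) ∘
      fun p : ℕ × ℕ => Qx F q ^ p.1 * Qy F q ^ p.2) =
      fun p : ℕ × ℕ => Finsupp.single (p.1 + 1, p.2) ((1 : F)) := by
    funext p
    simp only [Function.comp_apply, LinearMap.mulLeft_apply]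
    rw [x_mul_mono, phi_mono]
  rw [h2]

lemma phi_mul_right_y (c : QV F) :
    phi F q (psi F q c * Qy F q) =
      Finsupp.linearCombination F
        (fun p : ℕ × ℕ => Finsupp.single (p.1, p.2 + 1) ((1 : F))) c := by
  have h1 : psi F q c * Qy F q = (LinearMap.mulRight F (Qy F q)) (psi F q c) := rfl
  rw [h1, psi, Finsupp.apply_linearCombination, Finsupp.apply_linearCombination]
  have h2 : ((phi F q) ∘ (LinearMap.mulRight F (Qy F q)) ∘
      fun p : ℕ × ℕ => Qx F q ^ p.1 * Qy F q ^ p.2) =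
      fun p : ℕ × ℕ => Finsupp.single (p.1, p.2 + 1) ((1 : F)) := by
    funext p
    simp only [Function.comp_apply, LinearMap.mulRight_apply]
    rw [mono_mul_y, phi_mono]
  rw [h2]

lemma phi_mul_left_y (c : QV F) :
    phi F q (Qy F q * psi F q c) =
      Finsupp.linearCombination F
        (fun p : ℕ × ℕ => Finsupp.single (p.1, p.2 + 1) (q ^ p.1)) c := by
  have h1 : Qy F q * psi F q c = (LinearMap.mulLeft F (Qy F q)) (psi F q c) := rfl
  rw [h1, psi, Finsupp.apply_linearCombination, Finsupp.apply_linearCombination]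
  have h2 : ((phi F q) ∘ (LinearMap.mulLeft F (Qy F q)) ∘
      fun p : ℕ × ℕ => Qx F q ^ p.1 * Qy F q ^ p.2) =
      fun p : ℕ × ℕ => Finsupp.single (p.1, p.2 + 1) (q ^ p.1) := by
    funext p
    simp only [Function.comp_apply, LinearMap.mulLeft_apply]
    rw [y_mul_mono, map_smul, phi_mono, Finsupp.smul_single', mul_one]
  rw [h2]

end QAux
theorem stmt_6 (F : Type) [Field F] [CharZero F] (q : F) (n : ℕ) (hn : 1 ≤ n)
    (hqn : q ^ n = 1) (hprim : ∀ k : ℕ, 0 < k → k < n → q ^ k ≠ 1)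
    (f : QPlane F q) :
    (∀ g : QPlane F q, f * g = g * f) ↔
      f ∈ Submodule.span F
        {m : QPlane F q | ∃ i j : ℕ, n ∣ i ∧ n ∣ j ∧ m = Qx F q ^ i * Qy F q ^ j} := by
  constructor
  · intro hcent
    set c := QAux.phi F q f with hc
    have hfc : QAux.psi F q c = f := QAux.psi_phi F q f
    -- coefficient conditions from commuting with x
    have hx : QAux.psi F q c * Qx F q = Qx F q * QAux.psi F q c := by
      rw [hfc]; exact hcent _
    have hEx := (QAux.phi_mul_right_x F q c).symm.trans
      ((congrArg (QAux.phi F q) hx).trans (QAux.phi_mul_left_x F q c))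
    have hcoefx : ∀ p : ℕ × ℕ, c p * q ^ p.2 = c p * 1 := by
      intro p
      have h1 := QAux.eval_lc F (fun r : ℕ × ℕ => (r.1 + 1, r.2)) (QAux.inj_x)
        (fun r => q ^ r.2) c p
      have h2 := QAux.eval_lc F (fun r : ℕ × ℕ => (r.1 + 1, r.2)) (QAux.inj_x)
        (fun _ => (1 : F)) c p
      have h3 := congrArg (fun u : QAux.QV F => u (p.1 + 1, p.2)) hEx
      exact h1.symm.trans (h3.trans h2)
    have hy : QAux.psi F q c * Qy F q = Qy F q * QAux.psi F q c := by
      rw [hfc]; exact hcent _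
    have hEy := (QAux.phi_mul_right_y F q c).symm.trans
      ((congrArg (QAux.phi F q) hy).trans (QAux.phi_mul_left_y F q c))
    have hcoefy : ∀ p : ℕ × ℕ, c p * 1 = c p * q ^ p.1 := by
      intro p
      have h1 := QAux.eval_lc F (fun r : ℕ × ℕ => (r.1, r.2 + 1)) (QAux.inj_y)
        (fun _ => (1 : F)) c p
      have h2 := QAux.eval_lc F (fun r : ℕ × ℕ => (r.1, r.2 + 1)) (QAux.inj_y)
        (fun r => q ^ r.1) c p
      have h3 := congrArg (fun u : QAux.QV F => u (p.1, p.2 + 1)) hEy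
      exact h1.symm.trans (h3.trans h2)
    rw [← hfc, QAux.psi, Finsupp.linearCombination_apply, Finsupp.sum]
    apply Submodule.sum_mem
    intro p hp
    have hcp : c p ≠ 0 := Finsupp.mem_support_iff.mp hp
    have hq2 : q ^ p.2 = 1 := by
      have h := mul_left_cancel₀ hcp (hcoefx p)
      simpa using h
    have hq1 : q ^ p.1 = 1 := by
      have h := mul_left_cancel₀ hcp (hcoefy p).symm
      simpa using h
    exact Submodule.smul_mem _ _ (Submodule.subset_span
      ⟨p.1, p.2, QAux.pow_eq_one_of F q n hn hqn hprim p.1 hq1,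
        QAux.pow_eq_one_of F q n hn hqn hprim p.2 hq2, rfl⟩)
  · intro hf
    have hle : Submodule.span F
        {m : QPlane F q | ∃ i j : ℕ, n ∣ i ∧ n ∣ j ∧ m = Qx F q ^ i * Qy F q ^ j} ≤
        Subalgebra.toSubmodule (Subalgebra.center F (QPlane F q)) := by
      rw [Submodule.span_le]
      rintro m ⟨i, j, hi, hj, rfl⟩
      have hqi : q ^ i = 1 := by
        obtain ⟨a, rfl⟩ := hi
        rw [pow_mul, hqn, one_pow]
      have hqj : q ^ j = 1 := by
        obtain ⟨b, rfl⟩ := hj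
        rw [pow_mul, hqn, one_pow]
      have hx : (Qx F q ^ i * Qy F q ^ j) * Qx F q = Qx F q * (Qx F q ^ i * Qy F q ^ j) := by
        rw [QAux.mono_mul_x, QAux.x_mul_mono, hqj, one_smul]
      have hy : (Qx F q ^ i * Qy F q ^ j) * Qy F q = Qy F q * (Qx F q ^ i * Qy F q ^ j) := by
        rw [QAux.mono_mul_y, QAux.y_mul_mono, hqi, one_smul]
      simp only [SetLike.mem_coe, Subalgebra.mem_toSubmodule, Subalgebra.mem_center_iff]
      intro g
      exact (QAux.central_of_gen F q _ hx hy g).symm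
    have hfz := hle hf
    simp only [Subalgebra.mem_toSubmodule] at hfz
    rw [Subalgebra.mem_center_iff] at hfz
    intro g
    exact (hfz g).symm
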